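/- arXiv:1301.6994 — 5 statements merged into one kernel-verified Lean document; each statement's English description precedes it below -/
import Mathlib

section
/- There exist an integer s ≥ 0 and subsets ∅ = R_0 ⊊ R_1 ⊊ ⋯ ⊊ R_s ⊆ Q such that: (i) c(R_s) < u - b; (ii) 0 < ρ(R_0, R_1) < ρ(R_1, R_2) < ⋯ < ρ(R_{s-1}, R_s) ≤ (u - b - c(R_s)) / (2N - u + 2 + b - |R_s|); (iii) for every 1 ≤ i ≤ s and every subset R with R_{i-1} ⊊ R ⊆ Q and c(R_{i-1}) < c(R) < u - b, one has ρ(R_{i-1}, R_i) ≤ ρ(R_{i-1}, R); (iv) for every subset R with R_s ⊊ R ⊆ Q and c(R_s) < c(R) < u - b, one has ρ(R_s, R) ≥ (u - b - c(R_s)) / (2N - u + 2 + b - |R_s|). -/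
/-- The dimension of the linear span of the linear forms `H j`, `j ∈ K`. -/
noncomputable def cdim (q m : ℕ) (H : Fin q → Module.Dual ℂ (Fin (m + 1) → ℂ))
    (K : Finset (Fin q)) : ℕ :=
  Module.finrank ℂ (Submodule.span ℂ (H '' (K : Set (Fin q))))

/-- The quotient `ρ(R1, R2) = (c(R2) - c(R1)) / (|R2| - |R1|)`. -/
noncomputable def rho (q m : ℕ) (H : Fin q → Module.Dual ℂ (Fin (m + 1) → ℂ))
    (R1 R2 : Finset (Fin q)) : ℝ :=
  ((cdim q m H R2 : ℝ) - (cdim q m H R1 : ℝ)) / ((R2.card : ℝ) - (R1.card : ℝ))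

namespace Stmt3Aux

/-! ### Pure real "mediant" lemmas -/

lemma med_le {A B C p r : ℝ} (hp : 0 < p) (hr : 0 < r)
    (h : (C - B) / r ≤ (B - A) / p) : (C - A) / (p + r) ≤ (B - A) / p := by
  rw [div_le_div_iff₀ hr hp] at h
  rw [div_le_div_iff₀ (by linarith) hp]
  nlinarith

lemma med3 {A B C p r : ℝ} (hp : 0 < p) (hr : 0 < r)
    (h : (B - A) / p < (C - A) / (p + r)) : (B - A) / p < (C - B) / r := by
  rw [div_lt_div_iff₀ hp (by linarith)] at h
  rw [div_lt_div_iff₀ hp hr]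
  nlinarith

lemma strictMono_of_adj {s : ℕ} {f : Fin s → ℝ}
    (h : ∀ (j : ℕ) (hj : j + 1 < s), f ⟨j, by omega⟩ < f ⟨j + 1, hj⟩) :
    StrictMono f := by
  have key : ∀ (b : ℕ) (hb : b < s) (a : ℕ) (ha : a < s), a < b →
      f ⟨a, ha⟩ < f ⟨b, hb⟩ := by
    intro b
    induction b with
    | zero => intro _ _ _ hab; omega
    | succ k ihk =>
      intro hb a ha hab
      rcases Nat.lt_succ_iff_lt_or_eq.mp hab with h' | h'
      · exact (ihk (by omega) a ha h').trans (h k hb)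
      · subst h'; exact h a hb
  intro a b hab
  exact key b.1 b.2 a.1 a.2 hab

variable (q m : ℕ) (H : Fin q → Module.Dual ℂ (Fin (m + 1) → ℂ)) (N : ℕ) (u b : ℤ)

lemma cdim_mono {K L : Finset (Fin q)} (h : K ⊆ L) : cdim q m H K ≤ cdim q m H L :=
  Set.finrank_mono (Set.image_mono h)

lemma cdim_le_card (K : Finset (Fin q)) : cdim q m H K ≤ K.card := by
  classical
  have he : H '' (K : Set (Fin q)) = ↑(K.image H) := (Finset.coe_image).symm
  rw [cdim, he]
  exact (finrank_span_finset_le_card _).trans Finset.card_image_le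

lemma cdim_empty : cdim q m H ∅ = 0 := by
  rw [cdim]
  rw [show H '' ((∅ : Finset (Fin q)) : Set (Fin q)) = ∅ by simp]
  rw [Submodule.span_empty]
  exact finrank_bot ℂ _

/-- Admissible extensions. -/
def Adm (X R : Finset (Fin q)) : Prop :=
  X ⊂ R ∧ cdim q m H X < cdim q m H R ∧ (cdim q m H R : ℤ) < u - b

/-- The threshold `τ(X)`. -/
noncomputable def tauV (X : Finset (Fin q)) : ℝ :=
  ((u : ℝ) - (b : ℝ) - (cdim q m H X : ℝ)) /
    (2 * (N : ℝ) - (u : ℝ) + 2 + (b : ℝ) - (X.card : ℝ))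

/-- One step of the greedy construction. -/
def Step (X Y : Finset (Fin q)) : Prop :=
  Adm q m H u b X Y ∧
  (∀ R, Adm q m H u b X R → rho q m H X Y ≤ rho q m H X R) ∧
  (∀ R, Adm q m H u b X R → rho q m H X R = rho q m H X Y → R.card ≤ Y.card) ∧
  rho q m H X Y < tauV q m H N u b X

/-- The stopping condition. -/
def Stop (X : Finset (Fin q)) : Prop :=
  ∀ R, Adm q m H u b X R → tauV q m H N u b X ≤ rho q m H X R

lemma rho_pos {X Y : Finset (Fin q)} (h : Adm q m H u b X Y) :
    0 < rho q m H X Y := by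
  have h1 : (cdim q m H X : ℝ) < cdim q m H Y := by exact_mod_cast h.2.1
  have h2 : (X.card : ℝ) < Y.card := by exact_mod_cast Finset.card_lt_card h.1
  exact div_pos (by linarith) (by linarith)

lemma step_lt {X Y Z : Finset (Fin q)} (hXY : Step q m H N u b X Y)
    (hYZ : Step q m H N u b Y Z) : rho q m H X Y < rho q m H Y Z := by
  by_contra hcon
  push_neg at hcon
  have hAdmXY := hXY.1
  have hAdmYZ := hYZ.1
  have hAdmXZ : Adm q m H u b X Z :=
    ⟨hAdmXY.1.trans hAdmYZ.1, hAdmXY.2.1.trans hAdmYZ.2.1, hAdmYZ.2.2⟩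
  have hp : (0 : ℝ) < (Y.card : ℝ) - X.card := by
    have := Finset.card_lt_card hAdmXY.1
    have : (X.card : ℝ) < Y.card := by exact_mod_cast this
    linarith
  have hr : (0 : ℝ) < (Z.card : ℝ) - Y.card := by
    have := Finset.card_lt_card hAdmYZ.1
    have : (Y.card : ℝ) < Z.card := by exact_mod_cast this
    linarith
  have hkey : rho q m H X Z ≤ rho q m H X Y := by
    unfold rho at hcon ⊢
    have hd : ((Z.card : ℝ) - X.card) = ((Y.card : ℝ) - X.card) + ((Z.card : ℝ) - Y.card) := by
      ring
    rw [hd]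
    exact med_le hp hr hcon
  have hge : rho q m H X Y ≤ rho q m H X Z := hXY.2.1 Z hAdmXZ
  have hcards := hXY.2.2.1 Z hAdmXZ (le_antisymm hkey hge)
  have := Finset.card_lt_card hAdmYZ.1
  omega

lemma step_tau {X Y : Finset (Fin q)} (hst : Step q m H N u b X Y)
    (hc : (Y.card : ℝ) < 2 * (N : ℝ) - (u : ℝ) + 2 + (b : ℝ)) :
    rho q m H X Y < tauV q m H N u b Y := by
  obtain ⟨hAdm, -, -, hlt⟩ := hst
  have hp : (0 : ℝ) < (Y.card : ℝ) - X.card := by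
    have := Finset.card_lt_card hAdm.1
    have : (X.card : ℝ) < Y.card := by exact_mod_cast this
    linarith
  have hr : (0 : ℝ) < 2 * (N : ℝ) - (u : ℝ) + 2 + (b : ℝ) - Y.card := by linarith
  unfold tauV rho at hlt ⊢
  have hd : (2 * (N : ℝ) - (u : ℝ) + 2 + (b : ℝ) - X.card)
      = ((Y.card : ℝ) - X.card) + (2 * (N : ℝ) - (u : ℝ) + 2 + (b : ℝ) - Y.card) := by
    ring
  rw [hd] at hlt
  exact med3 hp hr hlt

/-- The greedy chain exists. -/
lemma chain (n : ℕ) : ∀ X : Finset (Fin q), q - X.card ≤ n →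
    ∃ (s : ℕ) (R : Fin (s + 1) → Finset (Fin q)), R 0 = X ∧
      (∀ i : Fin s, Step q m H N u b (R i.castSucc) (R i.succ)) ∧
      Stop q m H N u b (R (Fin.last s)) := by
  induction n with
  | zero =>
    intro X hX
    refine ⟨0, fun _ => X, rfl, fun i => i.elim0, ?_⟩
    intro R hR
    exfalso
    have hXR : X ⊂ R := hR.1
    have h1 := Finset.card_lt_card hXR
    have h2 : R.card ≤ q := by simpa using Finset.card_le_univ R
    omega
  | succ n ih =>
    intro X hX
    by_cases hstop : Stop q m H N u b X
    · exact ⟨0, fun _ => X, rfl, fun i => i.elim0, hstop⟩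
    · classical
      rw [Stop] at hstop
      push_neg at hstop
      obtain ⟨W, hW, hWlt⟩ := hstop
      set A : Finset (Finset (Fin q)) :=
        Finset.univ.filter (fun R => Adm q m H u b X R) with hA
      have hAmem : ∀ R, R ∈ A ↔ Adm q m H u b X R := by intro R; simp [hA]
      have hAne : A.Nonempty := ⟨W, (hAmem W).2 hW⟩
      obtain ⟨Y0, hY0A, hY0min⟩ := A.exists_min_image (fun R => rho q m H X R) hAne
      set B : Finset (Finset (Fin q)) :=
        A.filter (fun R => rho q m H X R = rho q m H X Y0) with hB
      have hBne : B.Nonempty := ⟨Y0, by simp [hB, hY0A]⟩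
      obtain ⟨Y, hYB, hYmax⟩ := B.exists_max_image (fun R => R.card) hBne
      have hYA : Y ∈ A := (Finset.mem_filter.mp hYB).1
      have hYrho : rho q m H X Y = rho q m H X Y0 := (Finset.mem_filter.mp hYB).2
      have hYAdm : Adm q m H u b X Y := (hAmem Y).1 hYA
      have hmin : ∀ R, Adm q m H u b X R → rho q m H X Y ≤ rho q m H X R := by
        intro R hR
        rw [hYrho]
        exact hY0min R ((hAmem R).2 hR)
      have hmax : ∀ R, Adm q m H u b X R → rho q m H X R = rho q m H X Y →
          R.card ≤ Y.card := by
        intro R hR he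
        exact hYmax R (by simp [hB, hAmem, hR, he, hYrho])
      have hlt : rho q m H X Y < tauV q m H N u b X := lt_of_le_of_lt (hmin W hW) hWlt
      have hstepXY : Step q m H N u b X Y := ⟨hYAdm, hmin, hmax, hlt⟩
      have hcard : q - Y.card ≤ n := by
        have h1 := Finset.card_lt_card hYAdm.1
        have h2 : Y.card ≤ q := by simpa using Finset.card_le_univ Y
        omega
      obtain ⟨s, R, hR0, hRstep, hRstop⟩ := ih Y hcard
      refine ⟨s + 1, Fin.cons X R, Fin.cons_zero _ _, ?_, ?_⟩
      · intro i
        cases i using Fin.cases with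
        | zero =>
          simp only [Fin.castSucc_zero, Fin.cons_zero, Fin.succ_zero_eq_one]
          have h1 : (1 : Fin (s + 2)) = Fin.succ 0 := rfl
          rw [h1, Fin.cons_succ, hR0]
          exact hstepXY
        | succ j =>
          simp only [← Fin.succ_castSucc, Fin.cons_succ]
          exact hRstep j
      · have hlast : Fin.last (s + 1) = Fin.succ (Fin.last s) := (Fin.succ_last s).symm
        rw [hlast, Fin.cons_succ]
        exact hRstop

end Stmt3Aux

open Stmt3Aux in
theorem stmt3 (q m : ℕ) (hq : 0 < q)
    (H : Fin q → Module.Dual ℂ (Fin (m + 1) → ℂ))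
    (N : ℕ) (hN : 0 < N) (hNq : N + 1 ≤ q)
    (u b : ℤ) (hb : -1 ≤ b) (hub : b < u)
    (hrank : ∀ R : Finset (Fin q), R.card = N + 1 → u - b ≤ (cdim q m H R : ℤ))
    (hq2 : 2 * (N : ℤ) - u + 2 + b ≤ (q : ℤ)) :
    ∃ (s : ℕ) (R : Fin (s + 1) → Finset (Fin q)),
      R 0 = ∅ ∧
      (∀ i : Fin s, R i.castSucc ⊂ R i.succ) ∧
      -- (i)
      (cdim q m H (R (Fin.last s)) : ℤ) < u - b ∧
      -- (ii)
      StrictMono (fun i : Fin s => rho q m H (R i.castSucc) (R i.succ)) ∧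
      (∀ i : Fin s,
        0 < rho q m H (R i.castSucc) (R i.succ) ∧
        rho q m H (R i.castSucc) (R i.succ) ≤
          ((u : ℝ) - (b : ℝ) - (cdim q m H (R (Fin.last s)) : ℝ)) /
            (2 * (N : ℝ) - (u : ℝ) + 2 + (b : ℝ) - ((R (Fin.last s)).card : ℝ))) ∧
      -- (iii)
      (∀ i : Fin s, ∀ R' : Finset (Fin q), R i.castSucc ⊂ R' →
        cdim q m H (R i.castSucc) < cdim q m H R' →
        (cdim q m H R' : ℤ) < u - b →
        rho q m H (R i.castSucc) (R i.succ) ≤ rho q m H (R i.castSucc) R') ∧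
      -- (iv)
      (∀ R' : Finset (Fin q), R (Fin.last s) ⊂ R' →
        cdim q m H (R (Fin.last s)) < cdim q m H R' →
        (cdim q m H R' : ℤ) < u - b →
        ((u : ℝ) - (b : ℝ) - (cdim q m H (R (Fin.last s)) : ℝ)) /
            (2 * (N : ℝ) - (u : ℝ) + 2 + (b : ℝ) - ((R (Fin.last s)).card : ℝ)) ≤
          rho q m H (R (Fin.last s)) R') := by
  -- basic consequences of the rank hypothesis
  have hub1 : u - b ≤ (N : ℤ) + 1 := by
    obtain ⟨S, hSsub, hScard⟩ :=
      Finset.exists_subset_card_eq (s := (Finset.univ : Finset (Fin q))) (n := N + 1)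
        (by simpa using hNq)
    have h1 := hrank S hScard
    have h2 : cdim q m H S ≤ N + 1 := by
      have := cdim_le_card q m H S
      omega
    omega
  have card_le_N : ∀ X : Finset (Fin q), (cdim q m H X : ℤ) < u - b → X.card ≤ N := by
    intro X hX
    by_contra hcon
    push_neg at hcon
    obtain ⟨S, hS, hScard⟩ := Finset.exists_subset_card_eq (s := X) (n := N + 1) (by omega)
    have h1 := hrank S hScard
    have h2 := cdim_mono q m H hS
    omega
  -- get the chain
  obtain ⟨s, R, h0, hstep, hstop⟩ := chain q m H N u b q ∅ (by simp)
  have hlt_all : ∀ i : Fin (s + 1), (cdim q m H (R i) : ℤ) < u - b := by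
    intro i
    obtain ⟨k, hk⟩ := i
    cases k with
    | zero =>
      have he : (⟨0, hk⟩ : Fin (s + 1)) = 0 := rfl
      rw [he, h0, cdim_empty]
      omega
    | succ k' => exact (hstep ⟨k', by omega⟩).1.2.2
  have hcardN : ∀ i : Fin (s + 1),
      ((R i).card : ℝ) < 2 * (N : ℝ) - (u : ℝ) + 2 + (b : ℝ) := by
    intro i
    have h1 : (R i).card ≤ N := card_le_N _ (hlt_all i)
    have h2 : ((R i).card : ℤ) < 2 * (N : ℤ) - u + 2 + b := by omega
    exact_mod_cast h2
  -- strict monotonicity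
  have hmono : StrictMono (fun i : Fin s => rho q m H (R i.castSucc) (R i.succ)) := by
    apply strictMono_of_adj
    intro j hj
    exact step_lt q m H N u b (hstep ⟨j, by omega⟩) (hstep ⟨j + 1, hj⟩)
  refine ⟨s, R, h0, fun i => (hstep i).1.1, hlt_all (Fin.last s), hmono, ?_, ?_, ?_⟩
  · -- (ii)
    intro i
    refine ⟨rho_pos q m H u b (hstep i).1, ?_⟩
    have hs : 0 < s := i.pos
    have htopval : s - 1 < s := by omega
    set top : Fin s := ⟨s - 1, htopval⟩ with htop
    have hle : i ≤ top := by
      rw [Fin.le_def]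
      show i.val ≤ s - 1
      have := i.isLt
      omega
    have h1 : rho q m H (R i.castSucc) (R i.succ) ≤
        rho q m H (R top.castSucc) (R top.succ) := hmono.monotone hle
    have hsucc : top.succ = Fin.last s := by
      ext
      show s - 1 + 1 = s
      omega
    have hstept := hstep top
    rw [hsucc] at hstept h1
    have h2 := step_tau q m H N u b hstept (hcardN (Fin.last s))
    exact (h1.trans_lt h2).le
  · -- (iii)
    intro i R' h1 h2 h3
    exact (hstep i).2.1 R' ⟨h1, h2, h3⟩
  · -- (iv)
    intro R' h1 h2 h3
    exact hstop R' ⟨h1, h2, h3⟩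
end

section
/- Let ω(1), …, ω(q) be positive real numbers such that Σ_{j∈K} ω(j) ≤ (n - u + 2 + b)·c(K) for every subset K ⊆ Q with |K| ≤ N + 1. Then for all nonnegative real numbers E_1, …, E_q and every subset R ⊆ Q with |R| ≤ N + 1, there exist pairwise distinct indices j_1, …, j_{c(R)} ∈ R such that the linear span of {H_{j_1}, …, H_{j_{c(R)}}} equals the linear span of {H_j : j ∈ R} and Σ_{j∈R} ω(j)·E_j ≤ (n - u + 2 + b)·(E_{j_1} + ⋯ + E_{j_{c(R)}}). -/
/-- `n + 1`, where `n = (max_{K ⊆ Q} c(K)) - 1`. -/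
noncomputable def nDimSucc (q m : ℕ) (H : Fin q → Module.Dual ℂ (Fin (m + 1) → ℂ)) : ℕ :=
  Finset.univ.powerset.sup (cdim q m H)

private lemma telescope (g : ℕ → ℝ) (a b : ℕ) (h : a ≤ b) :
    ∑ k ∈ Finset.Ico a b, (g k - g (k+1)) = g a - g b := by
  induction b, h using Nat.le_induction with
  | base => simp
  | succ n hn ih => rw [Finset.sum_Ico_succ_top hn, ih]; ring

set_option maxHeartbeats 1000000 in
theorem stmt5 (q m : ℕ) (hq : 0 < q)
    (H : Fin q → Module.Dual ℂ (Fin (m + 1) → ℂ))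
    (N : ℕ) (hN : 0 < N) (hNq : N + 1 ≤ q)
    (u b : ℤ) (hb : -1 ≤ b) (hub : b < u)
    (hrank : ∀ R : Finset (Fin q), R.card = N + 1 → u - b ≤ (cdim q m H R : ℤ))
    (ω : Fin q → ℝ) (hω : ∀ j : Fin q, 0 < ω j)
    (hωsum : ∀ K : Finset (Fin q), K.card ≤ N + 1 →
      ∑ j ∈ K, ω j ≤
        (((nDimSucc q m H : ℝ) - 1) - (u : ℝ) + 2 + (b : ℝ)) * (cdim q m H K : ℝ))
    (E : Fin q → ℝ) (hE : ∀ j : Fin q, 0 ≤ E j)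
    (R : Finset (Fin q)) (hR : R.card ≤ N + 1) :
    ∃ j : Fin (cdim q m H R) → Fin q,
      Function.Injective j ∧ (∀ i, j i ∈ R) ∧
      Submodule.span ℂ (Set.range (H ∘ j)) = Submodule.span ℂ (H '' (R : Set (Fin q))) ∧
      ∑ l ∈ R, ω l * E l ≤
        (((nDimSucc q m H : ℝ) - 1) - (u : ℝ) + 2 + (b : ℝ)) * ∑ i, E (j i) := by
  classical
  set A : ℝ := (((nDimSucc q m H : ℝ) - 1) - (u : ℝ) + 2 + (b : ℝ)) with hA
  set s := R.card with hs
  -- sorted enumeration of R with E nonincreasing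
  let e1 : Fin s ≃ {x // x ∈ R} := R.equivFin.symm
  let σ : Equiv.Perm (Fin s) := Tuple.sort (fun i => -E (e1 i))
  let e : Fin s → Fin q := fun i => (e1 (σ i) : Fin q)
  have he_inj : Function.Injective e := fun a b hab =>
    σ.injective (e1.injective (Subtype.ext hab))
  have he_mem : ∀ i, e i ∈ R := fun i => (e1 (σ i)).2
  have he_anti : ∀ i j : Fin s, i ≤ j → E (e j) ≤ E (e i) := by
    intro i j hij
    have h := Tuple.monotone_sort (fun i => -E (e1 i)) hij
    simp only [Function.comp_apply] at h
    simpa [e, σ] using neg_le_neg_iff.mp h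
  have himg : Finset.univ.image e = R := by
    apply Finset.eq_of_subset_of_card_le
    · intro x hx
      obtain ⟨i, _, rfl⟩ := Finset.mem_image.mp hx
      exact he_mem i
    · rw [Finset.card_image_of_injective _ he_inj, Finset.card_univ, Fintype.card_fin]
  -- prefixes
  set P : ℕ → Finset (Fin q) :=
    fun k => (Finset.univ.filter fun i : Fin s => (i : ℕ) < k).image e with hPdef
  have hP0 : P 0 = ∅ := by simp [hPdef]
  have hPs : P s = R := by
    have h1 : (Finset.univ.filter fun i : Fin s => (i : ℕ) < s) = Finset.univ := by
      apply Finset.filter_true_of_mem; intro i _; exact i.isLt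
    show (Finset.univ.filter fun i : Fin s => (i : ℕ) < s).image e = R
    rw [h1, himg]
  have hPcard : ∀ k, k ≤ s → (P k).card = k := by
    intro k hk
    rw [hPdef, Finset.card_image_of_injective _ he_inj]
    have : (Finset.univ.filter fun i : Fin s => (i : ℕ) < k) =
        (Finset.univ : Finset (Fin k)).image (Fin.castLE hk) := by
      ext i
      simp only [Finset.mem_filter, Finset.mem_univ, true_and, Finset.mem_image]
      constructor
      · intro h
        exact ⟨⟨(i : ℕ), h⟩, Fin.ext rfl⟩
      · rintro ⟨a, -, rfl⟩; exact a.isLt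
    rw [this, Finset.card_image_of_injective _ (Fin.castLE_injective hk),
      Finset.card_univ, Fintype.card_fin]
  have hPmono : ∀ k l, k ≤ l → P k ⊆ P l := by
    intro k l hkl
    intro x hx
    obtain ⟨i, hi, rfl⟩ := Finset.mem_image.mp hx
    exact Finset.mem_image.mpr ⟨i, Finset.mem_filter.mpr
      ⟨Finset.mem_univ _, lt_of_lt_of_le (Finset.mem_filter.mp hi).2 hkl⟩, rfl⟩
  have hPstep : ∀ k (hk : k < s), P (k+1) = insert (e ⟨k, hk⟩) (P k) := by
    intro k hk
    ext x
    simp only [hPdef, Finset.mem_image, Finset.mem_filter, Finset.mem_univ, true_and,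
      Finset.mem_insert]
    constructor
    · rintro ⟨i, hi, rfl⟩
      rcases Nat.lt_succ_iff_lt_or_eq.mp hi with h | h
      · exact Or.inr ⟨i, h, rfl⟩
      · exact Or.inl (by congr 1; exact Fin.ext h)
    · rintro (rfl | ⟨i, hi, rfl⟩)
      · exact ⟨⟨k, hk⟩, Nat.lt_succ_self k, rfl⟩
      · exact ⟨i, Nat.lt_succ_of_lt hi, rfl⟩
  -- spans and dimensions of prefixes
  set S : ℕ → Submodule ℂ (Module.Dual ℂ (Fin (m + 1) → ℂ)) :=
    fun k => Submodule.span ℂ (H '' ((P k : Set (Fin q)))) with hSdef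
  set c : ℕ → ℕ := fun k => cdim q m H (P k) with hcdef
  have hcS : ∀ k, c k = Module.finrank ℂ (S k) := fun k => rfl
  have hSmono : ∀ k l, k ≤ l → S k ≤ S l := by
    intro k l hkl
    exact Submodule.span_mono (Set.image_mono (by exact_mod_cast hPmono k l hkl))
  have hcmono : ∀ k l, k ≤ l → c k ≤ c l := by
    intro k l hkl
    exact Submodule.finrank_mono (hSmono k l hkl)
  have hSstep : ∀ k (hk : k < s),
      S (k+1) = Submodule.span ℂ {H (e ⟨k, hk⟩)} ⊔ S k := by
    intro k hk
    rw [hSdef]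
    simp only [hPstep k hk, Finset.coe_insert, Set.image_insert_eq, Submodule.span_insert]
  have hcstep : ∀ k (hk : k < s), c (k+1) ≤ c k + 1 := by
    intro k hk
    rw [hcS, hcS, hSstep k hk]
    calc Module.finrank ℂ ↥(Submodule.span ℂ {H (e ⟨k, hk⟩)} ⊔ S k)
        ≤ Module.finrank ℂ (Submodule.span ℂ {H (e ⟨k, hk⟩)}) + Module.finrank ℂ (S k) :=
          Submodule.finrank_add_le_finrank_add_finrank _ _
      _ ≤ 1 + Module.finrank ℂ (S k) := by
          gcongr
          simpa using finrank_span_le_card (R := ℂ) ({H (e ⟨k, hk⟩)} : Set _)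
      _ = Module.finrank ℂ (S k) + 1 := by ring
  have hc0 : c 0 = 0 := by
    rw [hcS]
    simp [hSdef, hP0]
  -- the set of jump indices
  set J : Finset (Fin s) :=
    Finset.univ.filter (fun i : Fin s => c ((i : ℕ)+1) = c (i : ℕ) + 1) with hJdef
  have hfilter_succ : ∀ k (hk : k < s),
      (J.filter fun i : Fin s => (i : ℕ) < k + 1) =
        if (⟨k, hk⟩ : Fin s) ∈ J then insert ⟨k, hk⟩ (J.filter fun i : Fin s => (i : ℕ) < k)
        else (J.filter fun i : Fin s => (i : ℕ) < k) := by
    intro k hk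
    split_ifs with hmem
    · ext i
      simp only [Finset.mem_filter, Finset.mem_insert]
      constructor
      · rintro ⟨hiJ, hik⟩
        rcases Nat.lt_succ_iff_lt_or_eq.mp hik with h | h
        · exact Or.inr ⟨hiJ, h⟩
        · exact Or.inl (Fin.ext h)
      · rintro (rfl | ⟨hiJ, hik⟩)
        · exact ⟨hmem, Nat.lt_succ_self k⟩
        · exact ⟨hiJ, Nat.lt_succ_of_lt hik⟩
    · ext i
      simp only [Finset.mem_filter]
      constructor
      · rintro ⟨hiJ, hik⟩
        rcases Nat.lt_succ_iff_lt_or_eq.mp hik with h | h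
        · exact ⟨hiJ, h⟩
        · have hik' : i = (⟨k, hk⟩ : Fin s) := Fin.ext h
          exact absurd (hik' ▸ hiJ) hmem
      · rintro ⟨hiJ, hik⟩
        exact ⟨hiJ, Nat.lt_succ_of_lt hik⟩
  have hnotmem : ∀ k (hk : k < s), (⟨k, hk⟩ : Fin s) ∉ (J.filter fun i : Fin s => (i : ℕ) < k) := by
    intro k hk h
    exact absurd (Finset.mem_filter.mp h).2 (lt_irrefl k)
  -- Claim A: c k counts jumps below k
  have claimA : ∀ k, k ≤ s → c k = (J.filter fun i : Fin s => (i : ℕ) < k).card := by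
    intro k hk
    induction k with
    | zero => simpa using hc0
    | succ k ih =>
      have hks : k < s := hk
      have ihk := ih (Nat.le_of_lt hks)
      by_cases hmem : (⟨k, hks⟩ : Fin s) ∈ J
      · have hjump : c (k+1) = c k + 1 := (Finset.mem_filter.mp hmem).2
        rw [hjump, ihk, hfilter_succ k hks, if_pos hmem,
          Finset.card_insert_of_notMem (hnotmem k hks)]
      · have hnjump : c (k+1) ≠ c k + 1 := fun h => hmem (Finset.mem_filter.mpr ⟨Finset.mem_univ _, h⟩)
        have : c (k+1) = c k := by
          have h1 := hcmono k (k+1) (Nat.le_succ k)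
          have h2 := hcstep k hks
          omega
        rw [this, ihk, hfilter_succ k hks, if_neg hmem]
  -- Claim B: the chosen vectors span
  have claimB : ∀ k, k ≤ s →
      Submodule.span ℂ (H '' (((J.filter fun i : Fin s => (i : ℕ) < k).image e : Finset (Fin q)) : Set (Fin q))) = S k := by
    intro k hk
    induction k with
    | zero =>
      simp only [hSdef, hP0]
      congr 1
      simp
    | succ k ih =>
      have hks : k < s := hk
      have ihk := ih (Nat.le_of_lt hks)
      by_cases hmem : (⟨k, hks⟩ : Fin s) ∈ J
      · rw [hfilter_succ k hks, if_pos hmem, Finset.image_insert, Finset.coe_insert,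
          Set.image_insert_eq, Submodule.span_insert, ihk, hSstep k hks]
      · have hnjump : c (k+1) ≠ c k + 1 := fun h => hmem (Finset.mem_filter.mpr ⟨Finset.mem_univ _, h⟩)
        have hceq : c (k+1) = c k := by
          have h1 := hcmono k (k+1) (Nat.le_succ k)
          have h2 := hcstep k hks
          omega
        have hSeq : S k = S (k+1) := by
          apply Submodule.eq_of_le_of_finrank_le (hSmono k (k+1) (Nat.le_succ k))
          rw [← hcS, ← hcS, hceq]
        rw [hfilter_succ k hks, if_neg hmem, ihk, hSeq]
  have hJfull : (J.filter fun i : Fin s => (i : ℕ) < s) = J := by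
    apply Finset.filter_true_of_mem; intro i _; exact i.isLt
  have hJcard : J.card = cdim q m H R := by
    have := claimA s (le_refl s)
    rw [hJfull] at this
    rw [← this, hcdef]
    simp only [hPs]
  -- define the selection function
  let eq1 : Fin (cdim q m H R) ≃ {x // x ∈ J} := (finCongr hJcard.symm).trans J.equivFin.symm
  let j : Fin (cdim q m H R) → Fin q := fun i => e (eq1 i : Fin s)
  have hj_inj : Function.Injective j := fun a b hab =>
    eq1.injective (Subtype.ext (he_inj hab))
  have hj_mem : ∀ i, j i ∈ R := fun i => he_mem _
  -- range of j
  have hrange : Set.range j = (e '' (J : Set (Fin s))) := by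
    ext x
    constructor
    · rintro ⟨i, rfl⟩; exact ⟨(eq1 i : Fin s), (eq1 i).2, rfl⟩
    · rintro ⟨i, hi, rfl⟩
      exact ⟨eq1.symm ⟨i, hi⟩, by simp [j]⟩
  have hspan : Submodule.span ℂ (Set.range (H ∘ j)) =
      Submodule.span ℂ (H '' (R : Set (Fin q))) := by
    have h1 : Set.range (H ∘ j) = H '' ((J.image e : Finset (Fin q)) : Set (Fin q)) := by
      rw [Set.range_comp, hrange, Finset.coe_image]
    have h2 := claimB s (le_refl s)
    rw [hJfull] at h2
    rw [h1, h2, hSdef]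
    simp only [hPs]
  -- sums
  have hsumJ : ∑ i, E (j i) = ∑ i ∈ J, E (e i) := by
    rw [← Finset.sum_coe_sort J (fun i => E (e i))]
    exact Fintype.sum_equiv eq1 _ _ (fun i => rfl)
  -- the key inequality
  set g : ℕ → ℝ := fun k => if h : k < s then E (e ⟨k, h⟩) else 0 with hgdef
  have hg_nonneg : ∀ k, 0 ≤ g k := by
    intro k; rw [hgdef]; dsimp only; split_ifs; exacts [hE _, le_refl 0]
  have hd_nonneg : ∀ k, 0 ≤ g k - g (k+1) := by
    intro k
    rw [hgdef]; dsimp only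
    split_ifs with h1 h2 h2
    · exact sub_nonneg.mpr (he_anti ⟨k, h1⟩ ⟨k+1, h2⟩ (by simp [Fin.le_def]))
    · simpa using hE _
    · omega
    · simp
  have hgs : g s = 0 := by rw [hgdef]; simp
  have htel : ∀ i : Fin s, ∑ k ∈ Finset.Ico (i : ℕ) s, (g k - g (k+1)) = E (e i) := by
    intro i
    rw [telescope g _ _ (le_of_lt i.isLt), hgs, sub_zero, hgdef]
    simp
  -- Ico as filtered range
  have hIco : ∀ a : ℕ, a ≤ s → Finset.Ico a s = (Finset.range s).filter (fun k => a ≤ k) := by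
    intro a ha
    ext k
    simp only [Finset.mem_Ico, Finset.mem_filter, Finset.mem_range]
    tauto
  -- LHS rewrite
  have hLHS : ∑ l ∈ R, ω l * E l = ∑ i : Fin s, ω (e i) * E (e i) := by
    rw [← himg, Finset.sum_image (fun x _ y _ h => he_inj h)]
  -- W bound
  have hW : ∀ k, k < s →
      ∑ i ∈ Finset.univ.filter (fun i : Fin s => (i : ℕ) ≤ k), ω (e i) ≤ A * (c (k+1) : ℝ) := by
    intro k hk
    have hfeq : (Finset.univ.filter fun i : Fin s => (i : ℕ) ≤ k) =
        (Finset.univ.filter fun i : Fin s => (i : ℕ) < k + 1) := by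
      ext i; simp [Nat.lt_succ_iff]
    have : ∑ i ∈ Finset.univ.filter (fun i : Fin s => (i : ℕ) ≤ k), ω (e i)
        = ∑ l ∈ P (k+1), ω l := by
      rw [hfeq, hPdef, Finset.sum_image (fun x _ y _ h => he_inj h)]
    rw [this]
    exact hωsum (P (k+1)) (by rw [hPcard (k+1) hk]; omega)
  -- main computation
  have key : ∑ i : Fin s, ω (e i) * E (e i) ≤ A * ∑ i ∈ J, E (e i) := by
    calc ∑ i : Fin s, ω (e i) * E (e i)
        = ∑ i : Fin s, ∑ k ∈ Finset.Ico (i : ℕ) s, ω (e i) * (g k - g (k+1)) := by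
          refine Finset.sum_congr rfl (fun i _ => ?_)
          rw [← Finset.mul_sum, htel i]
      _ = ∑ k ∈ Finset.range s, ∑ i ∈ Finset.univ.filter (fun i : Fin s => (i : ℕ) ≤ k),
            ω (e i) * (g k - g (k+1)) := by
          calc ∑ i : Fin s, ∑ k ∈ Finset.Ico (i : ℕ) s, ω (e i) * (g k - g (k+1))
              = ∑ i : Fin s, ∑ k ∈ Finset.range s,
                  (if (i : ℕ) ≤ k then ω (e i) * (g k - g (k+1)) else 0) := by
                refine Finset.sum_congr rfl (fun i _ => ?_)
                rw [hIco (i : ℕ) (le_of_lt i.isLt), Finset.sum_filter]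
            _ = ∑ k ∈ Finset.range s, ∑ i : Fin s,
                  (if (i : ℕ) ≤ k then ω (e i) * (g k - g (k+1)) else 0) := Finset.sum_comm
            _ = ∑ k ∈ Finset.range s, ∑ i ∈ Finset.univ.filter (fun i : Fin s => (i : ℕ) ≤ k),
                  ω (e i) * (g k - g (k+1)) :=
                Finset.sum_congr rfl (fun k _ => (Finset.sum_filter _ _).symm)
      _ ≤ ∑ k ∈ Finset.range s, (A * (c (k+1) : ℝ)) * (g k - g (k+1)) := by
          refine Finset.sum_le_sum (fun k hk => ?_)
          rw [← Finset.sum_mul]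
          exact mul_le_mul_of_nonneg_right (hW k (Finset.mem_range.mp hk)) (hd_nonneg k)
      _ = A * ∑ k ∈ Finset.range s, ((J.filter fun i : Fin s => (i : ℕ) ≤ k).card : ℝ) * (g k - g (k+1)) := by
          rw [Finset.mul_sum]
          refine Finset.sum_congr rfl (fun k hk => ?_)
          have hk' : k < s := Finset.mem_range.mp hk
          have : c (k+1) = (J.filter fun i : Fin s => (i : ℕ) ≤ k).card := by
            rw [claimA (k+1) hk']
            congr 1
            ext i; simp [Nat.lt_succ_iff]
          rw [this]; ring
      _ = A * ∑ i ∈ J, E (e i) := by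
          congr 1
          calc ∑ k ∈ Finset.range s, ((J.filter fun i : Fin s => (i : ℕ) ≤ k).card : ℝ) * (g k - g (k+1))
              = ∑ k ∈ Finset.range s, ∑ i ∈ J.filter (fun i : Fin s => (i : ℕ) ≤ k), (g k - g (k+1)) := by
                refine Finset.sum_congr rfl (fun k _ => ?_)
                rw [Finset.sum_const, nsmul_eq_mul]
            _ = ∑ i ∈ J, ∑ k ∈ Finset.Ico (i : ℕ) s, (g k - g (k+1)) := by
                calc ∑ k ∈ Finset.range s, ∑ i ∈ J.filter (fun i : Fin s => (i : ℕ) ≤ k), (g k - g (k+1))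
                    = ∑ k ∈ Finset.range s, ∑ i ∈ J,
                        (if (i : ℕ) ≤ k then (g k - g (k+1)) else 0) :=
                      Finset.sum_congr rfl (fun k _ => Finset.sum_filter _ _)
                  _ = ∑ i ∈ J, ∑ k ∈ Finset.range s,
                        (if (i : ℕ) ≤ k then (g k - g (k+1)) else 0) := Finset.sum_comm
                  _ = ∑ i ∈ J, ∑ k ∈ (Finset.range s).filter (fun k => (i : ℕ) ≤ k),
                        (g k - g (k+1)) :=
                      Finset.sum_congr rfl (fun i _ => (Finset.sum_filter _ _).symm)
                  _ = ∑ i ∈ J, ∑ k ∈ Finset.Ico (i : ℕ) s, (g k - g (k+1)) :=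
                      Finset.sum_congr rfl (fun i _ => by rw [hIco (i : ℕ) (le_of_lt i.isLt)])
            _ = ∑ i ∈ J, E (e i) := Finset.sum_congr rfl (fun i _ => htel i)
  refine ⟨j, hj_inj, hj_mem, hspan, ?_⟩
  rw [hLHS, hsumJ]
  exact key
end

section
/- Let ω(1), …, ω(q) be positive real numbers such that Σ_{j∈K} ω(j) ≤ (n - u + 2 + b)·c(K) for every subset K ⊆ Q with |K| ≤ N + 1. Then for all nonnegative real numbers E_1, …, E_q and every subset R ⊆ Q with |R| = N + 1, there exist pairwise distinct indices j_1, …, j_{n₀+1} ∈ R such that the linear span of {H_{j_1}, …, H_{j_{n₀+1}}} equals the linear span of {H_j : j ∈ R} and Σ_{j∈R} ω(j)·E_j ≤ (n - u + 2 + b)·(E_{j_1} + ⋯ + E_{j_{n₀+1}}). -/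
/-- `n₀ + 1`, where `n₀ = (max_{K ⊆ Q, |K| ≤ N+1} c(K)) - 1`. -/
noncomputable def n0DimSucc (q m N : ℕ) (H : Fin q → Module.Dual ℂ (Fin (m + 1) → ℂ)) : ℕ :=
  (Finset.univ.powerset.filter (fun K : Finset (Fin q) => K.card ≤ N + 1)).sup (cdim q m H)


section Aux
open Submodule

variable {q m : ℕ} {H : Fin q → Module.Dual ℂ (Fin (m + 1) → ℂ)}


lemma cdim_le_card (K : Finset (Fin q)) : cdim q m H K ≤ K.card := by
  classical
  unfold cdim
  rw [← Finset.coe_image]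
  exact le_trans (finrank_span_finset_le_card _) (Finset.card_image_le)

lemma cdim_eq_card_of
    (S : Finset (Fin q))
    (li : LinearIndependent ℂ (Subtype.val : (H '' (S : Set (Fin q))) → Module.Dual ℂ (Fin (m+1) → ℂ)))
    (inj : Set.InjOn H (S : Set (Fin q))) :
    cdim q m H S = S.card := by
  classical
  unfold cdim
  rw [← Finset.coe_image] at li ⊢
  rw [finrank_span_finset_eq_card li, Finset.card_image_of_injOn inj]

lemma extendAux :
    ∀ (k : ℕ) (R S' : Finset (Fin q)), S' ⊆ R → R.card ≤ S'.card + k →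
    LinearIndependent ℂ (Subtype.val : (H '' (S' : Set (Fin q))) → Module.Dual ℂ (Fin (m+1) → ℂ)) →
    Set.InjOn H (S' : Set (Fin q)) →
    ∃ S : Finset (Fin q), S' ⊆ S ∧ S ⊆ R ∧
      LinearIndependent ℂ (Subtype.val : (H '' (S : Set (Fin q))) → Module.Dual ℂ (Fin (m+1) → ℂ)) ∧
      Set.InjOn H (S : Set (Fin q)) ∧
      span ℂ (H '' (S : Set (Fin q))) = span ℂ (H '' (R : Set (Fin q))) := by
  classical
  intro k
  induction k with
  | zero =>
    intro R S' hSR hcard li inj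
    have : S' = R := Finset.eq_of_subset_of_card_le hSR (by omega)
    exact ⟨S', subset_rfl, hSR, li, inj, by rw [this]⟩
  | succ k ih =>
    intro R S' hSR hcard li inj
    by_cases hspan : span ℂ (H '' (S' : Set (Fin q))) = span ℂ (H '' (R : Set (Fin q)))
    · exact ⟨S', subset_rfl, hSR, li, inj, hspan⟩
    · have hex : ∃ l ∈ R, H l ∉ span ℂ (H '' (S' : Set (Fin q))) := by
        by_contra hall
        push_neg at hall
        apply hspan
        apply le_antisymm
        · exact span_mono (Set.image_mono (by exact_mod_cast hSR))
        · rw [span_le]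
          rintro _ ⟨l, hl, rfl⟩
          exact hall l hl
      obtain ⟨l, hlR, hl⟩ := hex
      have hlS' : l ∉ S' := fun h => hl (subset_span ⟨l, h, rfl⟩)
      have himg : (H '' ((insert l S' : Finset (Fin q)) : Set (Fin q)))
          = insert (H l) (H '' (S' : Set (Fin q))) := by
        rw [Finset.coe_insert, Set.image_insert_eq]
      have li' : LinearIndependent ℂ
          (Subtype.val : (H '' ((insert l S' : Finset (Fin q)) : Set (Fin q))) → _) := by
        rw [himg]; exact LinearIndepOn.id_insert li hl
      have inj' : Set.InjOn H ((insert l S' : Finset (Fin q)) : Set (Fin q)) := by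
        rw [Finset.coe_insert]
        refine (Set.injOn_insert (fun h => hlS' (by exact_mod_cast h))).mpr
          ⟨inj, fun hmem => hl (subset_span hmem)⟩
      have := ih R (insert l S') (Finset.insert_subset hlR hSR)
        (by rw [Finset.card_insert_of_notMem hlS']; omega) li' inj'
      obtain ⟨S, h1, h2, h3, h4, h5⟩ := this
      exact ⟨S, (Finset.subset_insert l S').trans h1, h2, h3, h4, h5⟩

lemma mainAux (A : ℝ) (hA : 0 ≤ A) (ω : Fin q → ℝ) :
    ∀ (r : ℕ) (R : Finset (Fin q)), R.card ≤ r →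
    (∀ K : Finset (Fin q), K ⊆ R → ∑ j ∈ K, ω j ≤ A * (cdim q m H K : ℝ)) →
    ∀ E : Fin q → ℝ, (∀ l ∈ R, 0 ≤ E l) →
    ∃ S : Finset (Fin q), S ⊆ R ∧ S.card = cdim q m H R ∧
      span ℂ (H '' (S : Set (Fin q))) = span ℂ (H '' (R : Set (Fin q))) ∧
      ∑ l ∈ R, ω l * E l ≤ A * ∑ l ∈ S, E l := by
  classical
  intro r
  induction r with
  | zero =>
    intro R hcard _ E _
    have hR : R = ∅ := Finset.card_eq_zero.mp (Nat.le_zero.mp hcard)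
    subst hR
    refine ⟨∅, subset_rfl, ?_, rfl, by simp⟩
    unfold cdim
    rw [Finset.coe_empty, Set.image_empty, Submodule.span_empty]
    simp [finrank_bot]
  | succ r ih =>
    intro R hcard hK E hE
    rcases R.eq_empty_or_nonempty with hR | hR
    · subst hR
      refine ⟨∅, subset_rfl, ?_, rfl, by simp⟩
      unfold cdim
      rw [Finset.coe_empty, Set.image_empty, Submodule.span_empty]
      simp [finrank_bot]
    · obtain ⟨t, htR, hmin⟩ := R.exists_min_image E hR
      set e := E t with he_def
      have he : 0 ≤ e := hE t htR
      set E' : Fin q → ℝ := fun l => E l - e with hE'_def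
      set R' : Finset (Fin q) := R.filter (fun l => E l ≠ e) with hR'_def
      have hR'R : R' ⊆ R := Finset.filter_subset _ _
      have htR' : t ∉ R' := by simp [hR'_def, he_def]
      have hR'card : R'.card ≤ r := by
        have h1 : R'.card < R.card := Finset.card_lt_card ⟨hR'R, fun h => htR' (h htR)⟩
        omega
      have hE'nn : ∀ l ∈ R', 0 ≤ E' l := by
        intro l hl
        have := hmin l (hR'R hl)
        simp only [hE'_def]; linarith
      obtain ⟨S', hS'R', hS'card, hS'span, hS'sum⟩ :=
        ih R' hR'card (fun K hKsub => hK K (hKsub.trans hR'R)) E' hE'nn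
      -- card S' = cdim S'
      have hcdimS' : cdim q m H S' = S'.card := by
        unfold cdim
        rw [hS'span, hS'card]; rfl
      -- image card equality
      have hc2 : cdim q m H S' ≤ (S'.image H).card := by
        unfold cdim
        rw [← Finset.coe_image]
        exact finrank_span_finset_le_card _
      have hceq : (S'.image H).card = S'.card := by
        have hc1 : (S'.image H).card ≤ S'.card := Finset.card_image_le
        omega
      -- derive linear independence data for S'
      have hinj : Set.InjOn H (S' : Set (Fin q)) := Finset.injOn_of_card_image_eq hceq
      have hli : LinearIndependent ℂ
          (Subtype.val : (H '' (S' : Set (Fin q))) → Module.Dual ℂ (Fin (m+1) → ℂ)) := by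
        rw [← Finset.coe_image]
        apply linearIndependent_iff_card_eq_finrank_span.mpr
        rw [Set.finrank, Subtype.range_coe]
        simp only [Finset.coe_sort_coe, Fintype.card_coe]
        unfold cdim at hcdimS'
        rw [← Finset.coe_image] at hcdimS'
        omega
      -- extend S' to a spanning subset S of R
      obtain ⟨S, hS'S, hSR, hliS, hinjS, hSspan⟩ :=
        extendAux (R.card) R S' (hS'R'.trans hR'R) (by omega) hli hinj
      have hScard : S.card = cdim q m H R := by
        have := cdim_eq_card_of S hliS hinjS
        unfold cdim at this ⊢
        rw [← hSspan]; omega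
      refine ⟨S, hSR, hScard, hSspan, ?_⟩
      -- the inequality
      have split : ∑ l ∈ R, ω l * E l = ∑ l ∈ R, ω l * E' l + e * ∑ l ∈ R, ω l := by
        rw [Finset.mul_sum, ← Finset.sum_add_distrib]
        apply Finset.sum_congr rfl
        intro l _
        simp only [hE'_def]; ring
      have hfilter : ∑ l ∈ R', ω l * E' l = ∑ l ∈ R, ω l * E' l := by
        apply Finset.sum_filter_of_ne
        intro x _ hx hxE
        apply hx
        simp only [hE'_def, hxE]
        ring
      have h2 : ∑ l ∈ R, ω l ≤ A * (cdim q m H R : ℝ) := hK R subset_rfl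
      have hcde : e * ∑ l ∈ R, ω l ≤ A * (e * S.card) := by
        rw [hScard]
        calc e * ∑ l ∈ R, ω l ≤ e * (A * (cdim q m H R : ℝ)) :=
              mul_le_mul_of_nonneg_left h2 he
          _ = A * (e * (cdim q m H R : ℝ)) := by ring
      have hsum1 : ∑ l ∈ R, ω l * E' l ≤ A * ∑ l ∈ S', E' l := by
        rw [← hfilter]; exact hS'sum
      have hS'E : ∑ l ∈ S', E' l = ∑ l ∈ S', E l - S'.card * e := by
        simp only [hE'_def]
        rw [Finset.sum_sub_distrib, Finset.sum_const, nsmul_eq_mul]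
      have hsdiff : ∑ l ∈ S \ S', E l + ∑ l ∈ S', E l = ∑ l ∈ S, E l :=
        Finset.sum_sdiff hS'S
      have hdiffcard : (S \ S').card = S.card - S'.card := Finset.card_sdiff_of_subset hS'S
      have hcardle : S'.card ≤ S.card := Finset.card_le_card hS'S
      have hdiffge : ((S \ S').card : ℝ) * e ≤ ∑ l ∈ S \ S', E l := by
        have := Finset.card_nsmul_le_sum (S \ S') E e
          (fun x hx => hmin x (hSR (Finset.sdiff_subset hx)))
        rwa [nsmul_eq_mul] at this
      have hcast : ((S \ S').card : ℝ) = (S.card : ℝ) - (S'.card : ℝ) := by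
        rw [hdiffcard]; push_cast [hcardle]; ring
      -- combine
      have key : ∑ l ∈ S', E' l + e * S.card ≤ ∑ l ∈ S, E l := by
        rw [hS'E, ← hsdiff]
        have : ((S.card : ℝ) - S'.card) * e ≤ ∑ l ∈ S \ S', E l := by
          rw [← hcast]; exact hdiffge
        linarith
      calc ∑ l ∈ R, ω l * E l = ∑ l ∈ R, ω l * E' l + e * ∑ l ∈ R, ω l := split
        _ ≤ A * ∑ l ∈ S', E' l + A * (e * S.card) := add_le_add hsum1 hcde
        _ = A * (∑ l ∈ S', E' l + e * S.card) := by ring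
        _ ≤ A * ∑ l ∈ S, E l := mul_le_mul_of_nonneg_left key hA

end Aux

open Submodule in
theorem stmt6 (q m : ℕ) (hq : 0 < q)
    (H : Fin q → Module.Dual ℂ (Fin (m + 1) → ℂ))
    (N : ℕ) (hN : 0 < N) (hNq : N + 1 ≤ q)
    (u b : ℤ) (hb : -1 ≤ b) (hub : b < u)
    (hrank : ∀ R : Finset (Fin q), R.card = N + 1 → u - b ≤ (cdim q m H R : ℤ))
    (ω : Fin q → ℝ) (hω : ∀ j : Fin q, 0 < ω j)
    (hωsum : ∀ K : Finset (Fin q), K.card ≤ N + 1 →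
      ∑ j ∈ K, ω j ≤
        (((nDimSucc q m H : ℝ) - 1) - (u : ℝ) + 2 + (b : ℝ)) * (cdim q m H K : ℝ))
    (E : Fin q → ℝ) (hE : ∀ j : Fin q, 0 ≤ E j)
    (R : Finset (Fin q)) (hR : R.card = N + 1) :
    ∃ j : Fin (n0DimSucc q m N H) → Fin q,
      Function.Injective j ∧ (∀ i, j i ∈ R) ∧
      Submodule.span ℂ (Set.range (H ∘ j)) = Submodule.span ℂ (H '' (R : Set (Fin q))) ∧
      ∑ l ∈ R, ω l * E l ≤
        (((nDimSucc q m H : ℝ) - 1) - (u : ℝ) + 2 + (b : ℝ)) * ∑ i, E (j i) := by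
  classical
  set A : ℝ := ((nDimSucc q m H : ℝ) - 1) - (u : ℝ) + 2 + (b : ℝ) with hA_def
  have hcdimR_le : cdim q m H R ≤ nDimSucc q m H :=
    Finset.le_sup (by simp [Finset.mem_powerset])
  have hA : 0 ≤ A := by
    have h2 : ((cdim q m H R : ℝ)) ≤ (nDimSucc q m H : ℝ) := by exact_mod_cast hcdimR_le
    have h1' : (u : ℝ) - (b : ℝ) ≤ (cdim q m H R : ℝ) := by exact_mod_cast hrank R hR
    rw [hA_def]; linarith
  obtain ⟨S, hSR, hScard, hSspan, hSsum⟩ :=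
    mainAux A hA ω (R.card) R le_rfl
      (fun K hKsub => hωsum K (by rw [← hR]; exact Finset.card_le_card hKsub))
      E (fun l _ => hE l)
  have hmemfilter : R ∈ (Finset.univ.powerset.filter
      (fun K : Finset (Fin q) => K.card ≤ N + 1)) := by
    simp [Finset.mem_filter, Finset.mem_powerset, hR]
  have hcdim_le_n0 : cdim q m H R ≤ n0DimSucc q m N H := Finset.le_sup hmemfilter
  have hn0_le : n0DimSucc q m N H ≤ N + 1 := by
    apply Finset.sup_le
    intro K hKK
    simp only [Finset.mem_filter] at hKK
    exact le_trans (cdim_le_card K) hKK.2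
  obtain ⟨T, hST, hTR, hTcard⟩ :=
    Finset.exists_subsuperset_card_eq (n := n0DimSucc q m N H) hSR (by omega) (by rw [hR]; exact hn0_le)
  have hTspan : Submodule.span ℂ (H '' (T : Set (Fin q)))
      = Submodule.span ℂ (H '' (R : Set (Fin q))) := by
    apply le_antisymm
    · exact span_mono (Set.image_mono (by exact_mod_cast hTR))
    · rw [← hSspan]; exact span_mono (Set.image_mono (by exact_mod_cast hST))
  set jiso := T.orderIsoOfFin hTcard with hjiso
  refine ⟨fun i => (jiso i : Fin q), ?_, ?_, ?_, ?_⟩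
  · intro a b' hab
    exact jiso.injective (Subtype.ext hab)
  · intro i; exact hTR (jiso i).2
  · have hrange : Set.range (fun i => ((jiso i : Fin q))) = (T : Set (Fin q)) := by
      ext x
      constructor
      · rintro ⟨i, rfl⟩; exact (jiso i).2
      · intro hx; exact ⟨jiso.symm ⟨x, hx⟩, by simp⟩
    rw [Set.range_comp, hrange, hTspan]
  · calc ∑ l ∈ R, ω l * E l ≤ A * ∑ l ∈ S, E l := hSsum
      _ ≤ A * ∑ l ∈ T, E l := mul_le_mul_of_nonneg_left
          (Finset.sum_le_sum_of_subset_of_nonneg hST (fun i _ _ => hE i)) hA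
      _ = A * ∑ i, E ((jiso i : Fin q)) := by
          congr 1
          rw [← Finset.sum_coe_sort T E]
          exact (Equiv.sum_comp jiso.toEquiv (fun x => E ↑x)).symm
end

section
/- Let E_0, …, E_m be real numbers with E_j > 1 for every 0 ≤ j ≤ m. Then there exist pairwise distinct indices j_1, …, j_k ∈ {0, …, m} such that the linear span of {H_{j_1}, …, H_{j_k}} has dimension k (i.e. H_{j_1}, …, H_{j_k} are linearly independent) and E_0·E_1⋯E_m ≤ (E_{j_1}·E_{j_2}⋯E_{j_k})^{m-k+2}. -/
set_option maxHeartbeats 1000000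

theorem stmt8 (N m : ℕ) (hN : 0 < N) (hm : 0 < m)
    (H : Fin (m + 1) → Module.Dual ℂ (Fin (N + 1) → ℂ)) (hH : ∀ j, H j ≠ 0)
    (k : ℕ) (hk : k = Module.finrank ℂ (Submodule.span ℂ (Set.range H)))
    (E : Fin (m + 1) → ℝ) (hE : ∀ j, 1 < E j) :
    ∃ j : Fin k → Fin (m + 1),
      Function.Injective j ∧ LinearIndependent ℂ (H ∘ j) ∧
      ∏ l, E l ≤ (∏ i, E (j i)) ^ ((m : ℝ) - (k : ℝ) + 2) := by
  classical
  -- choose j0 with maximal E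
  obtain ⟨j0, -, hj0max⟩ := Finset.exists_max_image Finset.univ E ⟨0, Finset.mem_univ 0⟩
  -- extend {H j0} to a maximal independent subset b of range H
  have hsingle : LinearIndependent ℂ
      ((↑) : ({H j0} : Set (Module.Dual ℂ (Fin (N + 1) → ℂ))) → Module.Dual ℂ (Fin (N + 1) → ℂ)) :=
    (linearIndepOn_singleton_iff (R := ℂ) (v := id)).2 (hH j0)
  have hsub : ({H j0} : Set (Module.Dual ℂ (Fin (N + 1) → ℂ))) ⊆ Set.range H := by
    simp [Set.singleton_subset_iff]
  obtain ⟨b, hbt, hsb, htb, hbind⟩ := exists_linearIndepOn_id_extension hsingle hsub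
  replace hbind : LinearIndependent ℂ ((↑) : b → Module.Dual ℂ (Fin (N + 1) → ℂ)) := hbind
  have hbfin : b.Finite := (Set.finite_range H).subset hbt
  haveI : Fintype b := hbfin.fintype
  -- span b = span (range H)
  have hspan : Submodule.span ℂ b = Submodule.span ℂ (Set.range H) := by
    apply le_antisymm (Submodule.span_mono hbt)
    exact Submodule.span_le.2 htb
  -- card b = k
  have hcard : Fintype.card b = k := by
    have := finrank_span_set_eq_card (s := b) hbind
    rw [hspan] at this
    rw [hk, this, Set.toFinset_card]
  -- equivalence Fin k ≃ b
  let e : Fin k ≃ b := (Fintype.equivFinOfCardEq hcard).symm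
  -- preimage map g : b → Fin (m+1), sending H j0 to j0
  have hpre : ∀ v : b, ∃ l, H l = (v : Module.Dual ℂ (Fin (N + 1) → ℂ)) := fun v => hbt v.2
  let g : b → Fin (m + 1) := fun v =>
    if h : (v : Module.Dual ℂ (Fin (N + 1) → ℂ)) = H j0 then j0 else (hpre v).choose
  have hg : ∀ v : b, H (g v) = (v : Module.Dual ℂ (Fin (N + 1) → ℂ)) := by
    intro v
    by_cases h : (v : Module.Dual ℂ (Fin (N + 1) → ℂ)) = H j0
    · simp [g, h]
    · simp only [g, dif_neg h]
      exact (hpre v).choose_spec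
  have hginj : Function.Injective g := by
    intro v w hvw
    have : H (g v) = H (g w) := by rw [hvw]
    rw [hg v, hg w] at this
    exact Subtype.ext this
  have hjinj : Function.Injective (g ∘ e) := hginj.comp e.injective
  refine ⟨g ∘ e, hjinj, ?_, ?_⟩
  · have : H ∘ (g ∘ e) = (↑) ∘ e := by
      funext i; exact hg (e i)
    rw [this]
    exact hbind.comp e e.injective
  -- the inequality
  · set P : ℝ := ∏ i, E ((g ∘ e) i) with hP
    have hfac : ∀ i : Fin k, 1 < E ((g ∘ e) i) := fun i => hE _
    have hP1 : 1 ≤ P := by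
      rw [hP]
      calc (1 : ℝ) = ∏ _i : Fin k, (1 : ℝ) := by simp
        _ ≤ ∏ i, E ((g ∘ e) i) :=
          Finset.prod_le_prod (fun i _ => zero_le_one) (fun i _ => (hfac i).le)
    have hPpos : (0 : ℝ) < P := lt_of_lt_of_le one_pos hP1
    -- j0 is in the range of g ∘ e
    have hj0mem : ∃ i : Fin k, (g ∘ e) i = j0 := by
      refine ⟨e.symm ⟨H j0, hsb rfl⟩, ?_⟩
      simp only [Function.comp_apply, Equiv.apply_symm_apply]
      simp [g]
    obtain ⟨i0, hi0⟩ := hj0mem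
    have hEP : ∀ l : Fin (m + 1), E l ≤ P := by
      intro l
      have h1 : (1 : ℝ) ≤ ∏ i ∈ Finset.univ.erase i0, E ((g ∘ e) i) := by
        calc (1 : ℝ) = ∏ _i ∈ Finset.univ.erase i0, (1 : ℝ) := by simp
          _ ≤ _ := Finset.prod_le_prod (fun i _ => zero_le_one) (fun i _ => (hfac i).le)
      have h2 : E ((g ∘ e) i0) ≤ P := by
        rw [hP, ← Finset.mul_prod_erase Finset.univ _ (Finset.mem_univ i0)]
        exact le_mul_of_one_le_right (le_of_lt (lt_trans one_pos (hfac i0))) h1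
      calc E l ≤ E j0 := hj0max l (Finset.mem_univ l)
        _ = E ((g ∘ e) i0) := by rw [hi0]
        _ ≤ P := h2
    -- k ≤ m + 1
    have hkm : k ≤ m + 1 := by
      rw [hk]
      have := finrank_range_le_card (R := ℂ) H
      simpa [Set.finrank] using this
    -- split product
    have hsplit : (∏ i, E ((g ∘ e) i)) * ∏ l ∈ (Finset.univ.image (g ∘ e))ᶜ, E l
        = ∏ l, E l := by
      rw [← Finset.prod_image (g := g ∘ e) (f := E) (fun x _ y _ h => hjinj h)]
      exact Finset.prod_mul_prod_compl _ _
    have hcardc : (Finset.univ.image (g ∘ e))ᶜ.card = m + 1 - k := by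
      rw [Finset.card_compl, Finset.card_image_of_injective _ hjinj]
      simp
    have hcompl : ∏ l ∈ (Finset.univ.image (g ∘ e))ᶜ, E l ≤ P ^ (m + 1 - k) := by
      rw [← hcardc, ← Finset.prod_const]
      exact Finset.prod_le_prod (fun x _ => le_of_lt (lt_trans one_pos (hE x)))
        (fun x _ => hEP x)
    have hfinal : ∏ l, E l ≤ P ^ (m + 2 - k) := by
      rw [← hsplit]
      calc P * ∏ l ∈ (Finset.univ.image (g ∘ e))ᶜ, E l
          ≤ P * P ^ (m + 1 - k) := mul_le_mul_of_nonneg_left hcompl (le_of_lt hPpos)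
        _ = P ^ (m + 2 - k) := by
            rw [← pow_succ']
            congr 1
            omega
    calc ∏ l, E l ≤ P ^ (m + 2 - k) := hfinal
      _ = P ^ ((m : ℝ) - (k : ℝ) + 2) := by
          rw [← Real.rpow_natCast P (m + 2 - k)]
          congr 1
          push_cast [Nat.cast_sub (by omega : k ≤ m + 2)]
          ring
end

section
/- Assume that for every choice of indices 1 ≤ i_0 < i_1 < ⋯ < i_t ≤ q the linear span of {H_{i_0}, …, H_{i_t}} has dimension at least u + 1, and let W be a nonzero linear subspace of ℂ^{m+1}. Then there exist m - u nonzero linear forms T_1, …, T_{m-u} on ℂ^{m+1} with the following properties: for every subset R ⊆ {1, …, q} with |R| = t + 1 and with the linear span of {H_j : j ∈ R} of dimension at least u + 1, the family {H_j : j ∈ R} ∪ {T_1, …, T_{m-u}} spans the full dual space of ℂ^{m+1} (equivalently, the intersection of the kernels of these t + 1 + m - u forms is {0}, i.e. the corresponding hyperplanes in ℂP^m are in (t + m - u)-subgeneral position); and W is not contained in the kernel of T_i for any 1 ≤ i ≤ m - u. -/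
theorem stmt9_annihilator_ne_top (m : ℕ) (W : Submodule ℂ (Fin (m + 1) → ℂ)) (hW : W ≠ ⊥) :
    W.dualAnnihilator ≠ ⊤ := by
  obtain ⟨w, hwW, hw0⟩ := Submodule.exists_mem_ne_zero_of_ne_bot hW
  intro h
  apply hw0
  rw [← Module.forall_dual_apply_eq_zero_iff ℂ w]
  intro φ
  have : φ ∈ W.dualAnnihilator := h ▸ Submodule.mem_top
  exact (Submodule.mem_dualAnnihilator φ).mp this w hwW

theorem stmt9_aux (q m u t : ℕ) (hum : u ≤ m)
    (H : Fin q → Module.Dual ℂ (Fin (m + 1) → ℂ))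
    (W : Submodule ℂ (Fin (m + 1) → ℂ)) (hW : W ≠ ⊥) :
    ∀ k : ℕ, ∃ T : Fin k → Module.Dual ℂ (Fin (m + 1) → ℂ),
      (∀ i, ¬ W ≤ LinearMap.ker (T i)) ∧
      (∀ R : Finset (Fin q), R.card = t + 1 →
        u + 1 ≤ Module.finrank ℂ (Submodule.span ℂ (H '' (R : Set (Fin q)))) →
        min (m + 1) (u + 1 + k) ≤ Module.finrank ℂ
          ↥(Submodule.span ℂ (H '' (R : Set (Fin q))) ⊔ Submodule.span ℂ (Set.range T))) := by
  have hdim : Module.finrank ℂ (Module.Dual ℂ (Fin (m + 1) → ℂ)) = m + 1 := by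
    rw [Subspace.dual_finrank_eq, Module.finrank_fin_fun]
  intro k
  classical
  induction k with
  | zero =>
    refine ⟨Fin.elim0, fun i => i.elim0, fun R hR hrank => ?_⟩
    rw [Set.range_eq_empty, Submodule.span_empty, sup_bot_eq]
    omega
  | succ k ih =>
    obtain ⟨T, hT1, hT2⟩ := ih
    -- family of proper subspaces to avoid
    set p : Option (Finset (Fin q)) → Submodule ℂ (Module.Dual ℂ (Fin (m + 1) → ℂ)) :=
      fun o => match o with
        | none => W.dualAnnihilator
        | some R =>
          if Submodule.span ℂ (H '' (R : Set (Fin q))) ⊔ Submodule.span ℂ (Set.range T) = ⊤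
          then W.dualAnnihilator
          else Submodule.span ℂ (H '' (R : Set (Fin q))) ⊔ Submodule.span ℂ (Set.range T)
      with hp
    have hpt : ∀ o, p o ≠ ⊤ := by
      rintro (_ | R)
      · exact stmt9_annihilator_ne_top m W hW
      · simp only [hp]
        split
        · exact stmt9_annihilator_ne_top m W hW
        · assumption
    have hcov : ⋃ o, (p o : Set (Module.Dual ℂ (Fin (m + 1) → ℂ))) ≠ Set.univ := by
      intro h
      obtain ⟨o, ho⟩ := Subspace.exists_eq_top_of_iUnion_eq_univ h
      exact hpt o ho
    obtain ⟨x, hx⟩ : ∃ x, ∀ o, x ∉ p o := by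
      rw [Ne, Set.eq_univ_iff_forall] at hcov
      push_neg at hcov
      obtain ⟨x, hx⟩ := hcov
      exact ⟨x, fun o => by simpa using fun h => hx (Set.mem_iUnion.mpr ⟨o, h⟩)⟩
    refine ⟨Fin.cons x T, ?_, ?_⟩
    · intro i
      refine Fin.cases ?_ ?_ i
      · have := hx none
        simp only [hp, Submodule.mem_dualAnnihilator] at this
        push_neg at this
        obtain ⟨w, hwW, hw⟩ := this
        simp only [Fin.cons_zero]
        intro hle
        exact hw (hle hwW)
      · intro j
        simpa using hT1 j
    · intro R hR hrank
      have hrange : Set.range (Fin.cons x T : Fin (k + 1) → _) = insert x (Set.range T) :=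
        Fin.range_cons x T
      rw [hrange, Submodule.span_insert]
      set S := Submodule.span ℂ (H '' (R : Set (Fin q))) ⊔ Submodule.span ℂ (Set.range T) with hS
      have heq : Submodule.span ℂ (H '' (R : Set (Fin q))) ⊔
          (Submodule.span ℂ {x} ⊔ Submodule.span ℂ (Set.range T)) = S ⊔ Submodule.span ℂ {x} := by
        rw [hS]; rw [sup_comm (Submodule.span ℂ {x}), ← sup_assoc]
      rw [heq]
      by_cases hStop : S = ⊤
      · have : (S ⊔ Submodule.span ℂ {x}) = ⊤ := by rw [hStop]; simp
        rw [this, finrank_top, hdim]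
        omega
      · have hxS : x ∉ S := by
          have := hx (some R)
          simp only [hp, ← hS, if_neg hStop] at this
          exact this
        have hlt : S < S ⊔ Submodule.span ℂ {x} := by
          refine lt_of_le_of_ne le_sup_left ?_
          intro h
          apply hxS
          rw [h]
          exact Submodule.mem_sup_right (Submodule.mem_span_singleton_self x)
        have h1 : Module.finrank ℂ S < Module.finrank ℂ ↥(S ⊔ Submodule.span ℂ {x}) :=
          Submodule.finrank_lt_finrank_of_lt hlt
        have h2 : min (m + 1) (u + 1 + k) ≤ Module.finrank ℂ S := hT2 R hR hrank
        have h3 : Module.finrank ℂ S < m + 1 := by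
          have := Submodule.finrank_lt hStop
          omega
        omega

theorem stmt9 (q m u t : ℕ) (hq : 0 < q) (hm : 0 < m)
    (hu1 : 1 ≤ u) (hum : u ≤ m) (ht : t ≤ q - 1)
    (H : Fin q → Module.Dual ℂ (Fin (m + 1) → ℂ)) (hH : ∀ j, H j ≠ 0)
    (hsub : ∀ S : Finset (Fin q), S.card = t + 1 →
      u + 1 ≤ Module.finrank ℂ (Submodule.span ℂ (H '' (S : Set (Fin q)))))
    (W : Submodule ℂ (Fin (m + 1) → ℂ)) (hW : W ≠ ⊥) :
    ∃ T : Fin (m - u) → Module.Dual ℂ (Fin (m + 1) → ℂ),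
      (∀ i, T i ≠ 0) ∧
      (∀ R : Finset (Fin q), R.card = t + 1 →
        u + 1 ≤ Module.finrank ℂ (Submodule.span ℂ (H '' (R : Set (Fin q)))) →
        (⨅ j ∈ R, LinearMap.ker (H j)) ⊓ (⨅ i, LinearMap.ker (T i)) = ⊥) ∧
      (∀ i, ¬ W ≤ LinearMap.ker (T i)) := by
  obtain ⟨T, hT1, hT2⟩ := stmt9_aux q m u t hum H W hW (m - u)
  have hdim : Module.finrank ℂ (Module.Dual ℂ (Fin (m + 1) → ℂ)) = m + 1 := by
    rw [Subspace.dual_finrank_eq, Module.finrank_fin_fun]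
  refine ⟨T, ?_, ?_, hT1⟩
  · intro i h
    apply hT1 i
    rw [h, LinearMap.ker_zero]
    exact le_top
  · intro R hR hrank
    have hmin : min (m + 1) (u + 1 + (m - u)) = m + 1 := by omega
    have h2 := hT2 R hR hrank
    rw [hmin] at h2
    have htop : Submodule.span ℂ (H '' (R : Set (Fin q))) ⊔ Submodule.span ℂ (Set.range T) = ⊤ := by
      apply Submodule.eq_top_of_finrank_eq
      have := Submodule.finrank_le (Submodule.span ℂ (H '' (R : Set (Fin q))) ⊔
        Submodule.span ℂ (Set.range T))
      omega
    rw [eq_bot_iff]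
    intro v hv
    simp only [Submodule.mem_inf, Submodule.mem_iInf, LinearMap.mem_ker] at hv
    obtain ⟨hv1, hv2⟩ := hv
    rw [Submodule.mem_bot, ← Module.forall_dual_apply_eq_zero_iff ℂ v]
    intro φ
    have hφ : φ ∈ Submodule.span ℂ (H '' (R : Set (Fin q))) ⊔ Submodule.span ℂ (Set.range T) :=
      htop ▸ Submodule.mem_top
    have hle : Submodule.span ℂ (H '' (R : Set (Fin q))) ⊔ Submodule.span ℂ (Set.range T) ≤
        LinearMap.ker (Module.Dual.eval ℂ (Fin (m + 1) → ℂ) v) := by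
      refine sup_le (Submodule.span_le.mpr ?_) (Submodule.span_le.mpr ?_)
      · rintro _ ⟨j, hj, rfl⟩
        simp only [SetLike.mem_coe, LinearMap.mem_ker, Module.Dual.eval_apply]
        exact hv1 j hj
      · rintro _ ⟨i, rfl⟩
        simp only [SetLike.mem_coe, LinearMap.mem_ker, Module.Dual.eval_apply]
        exact hv2 i
    exact hle hφ
end
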